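/- Let b ≠ 0 and c be real constants, let ε ∈ {+1, −1}, and let J ⊆ ℝ be an open interval on which (b·s + c)² < 1. Then the function τ(s) = ε·(b·s + c)/√(1 − (b·s + c)²) is twice differentiable on J and satisfies the differential equation 2·τ''(s)·(1 + τ(s)²) − 3·τ'(s)·(1 + τ(s)²)' = 0 for all s ∈ J, where (1 + τ²)' denotes the derivative of s ↦ 1 + τ(s)². -/

import Mathlib

private lemma aux_d1 (b c ε s : ℝ) (hg : 0 < 1 - (b*s+c)^2) :
    HasDerivAt (fun s => ε * (b*s+c) / Real.sqrt (1 - (b*s+c)^2))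
      (ε * b / ((1 - (b*s+c)^2) * Real.sqrt (1 - (b*s+c)^2))) s := by
  have hsq : 0 < Real.sqrt (1 - (b*s+c)^2) := Real.sqrt_pos.mpr hg
  have hss : Real.sqrt (1 - (b*s+c)^2) ^ 2 = 1 - (b*s+c)^2 := Real.sq_sqrt hg.le
  have hu : HasDerivAt (fun s => b*s+c) b s := by
    simpa using ((hasDerivAt_id s).const_mul b).add_const c
  have hg' : HasDerivAt (fun s => 1 - (b*s+c)^2) (-(2*(b*s+c)*b)) s := by
    have := (hasDerivAt_const s (1:ℝ)).sub (hu.pow 2)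
    exact this.congr_deriv (by norm_num)
  have hsqrt := hg'.sqrt hg.ne'
  have hnum : HasDerivAt (fun s => ε*(b*s+c)) (ε*b) s := hu.const_mul ε
  have hdiv := hnum.div hsqrt hsq.ne'
  refine HasDerivAt.congr_deriv hdiv ?_
  symm
  set S := Real.sqrt (1 - (b*s+c)^2) with hS
  rw [← hss]
  field_simp
  linear_combination (-(ε*b))*hss

private lemma aux_d2 (b c ε s : ℝ) (hg : 0 < 1 - (b*s+c)^2) :
    HasDerivAt (fun s => ε * b / ((1 - (b*s+c)^2) * Real.sqrt (1 - (b*s+c)^2)))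
      (3 * ε * b^2 * (b*s+c) / ((1 - (b*s+c)^2)^2 * Real.sqrt (1 - (b*s+c)^2))) s := by
  have hsq : 0 < Real.sqrt (1 - (b*s+c)^2) := Real.sqrt_pos.mpr hg
  have hss : Real.sqrt (1 - (b*s+c)^2) ^ 2 = 1 - (b*s+c)^2 := Real.sq_sqrt hg.le
  have hu : HasDerivAt (fun s => b*s+c) b s := by
    simpa using ((hasDerivAt_id s).const_mul b).add_const c
  have hg' : HasDerivAt (fun s => 1 - (b*s+c)^2) (-(2*(b*s+c)*b)) s := by
    have := (hasDerivAt_const s (1:ℝ)).sub (hu.pow 2)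
    exact this.congr_deriv (by norm_num)
  have hsqrt := hg'.sqrt hg.ne'
  have hden := hg'.mul hsqrt
  have hne : (1 - (b*s+c)^2) * Real.sqrt (1 - (b*s+c)^2) ≠ 0 := by positivity
  have hdiv := (hasDerivAt_const s (ε*b)).div hden hne
  refine HasDerivAt.congr_deriv hdiv ?_
  symm
  simp only [Pi.mul_apply]
  set S := Real.sqrt (1 - (b*s+c)^2) with hS
  rw [← hss]
  field_simp
  ring

/-- The function `τ(s) = ε·(b·s + c)/√(1 − (b·s + c)²)` (with `b ≠ 0`, `ε = ±1`) is twice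
differentiable on an open interval `J` where `(b·s + c)² < 1`, and satisfies the differential
equation `2·τ''·(1 + τ²) − 3·τ'·(1 + τ²)' = 0` there. -/
theorem stmt_4 (b c ε : ℝ) (hb : b ≠ 0) (hε : ε = 1 ∨ ε = -1) (p q : ℝ)
    (hJ : ∀ s ∈ Set.Ioo p q, (b * s + c) ^ 2 < 1)
    (τ : ℝ → ℝ)
    (hτ : ∀ s, τ s = ε * (b * s + c) / Real.sqrt (1 - (b * s + c) ^ 2)) :
    (∀ s ∈ Set.Ioo p q, DifferentiableAt ℝ τ s ∧ DifferentiableAt ℝ (deriv τ) s) ∧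
      (∀ s ∈ Set.Ioo p q,
        2 * deriv (deriv τ) s * (1 + τ s ^ 2)
          - 3 * deriv τ s * deriv (fun u => 1 + τ u ^ 2) s = 0) := by
  have hτfun : τ = fun s => ε * (b * s + c) / Real.sqrt (1 - (b * s + c) ^ 2) := funext hτ
  -- first derivative of τ on J
  have key1 : ∀ s ∈ Set.Ioo p q,
      HasDerivAt τ (ε * b / ((1 - (b*s+c)^2) * Real.sqrt (1 - (b*s+c)^2))) s := by
    intro s hs
    have hg : 0 < 1 - (b*s+c)^2 := by have := hJ s hs; linarith
    rw [hτfun]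
    exact aux_d1 b c ε s hg
  -- deriv τ agrees with the explicit formula on a neighbourhood of each point of J
  have hEq : ∀ s ∈ Set.Ioo p q,
      deriv τ =ᶠ[nhds s]
        (fun s => ε * b / ((1 - (b*s+c)^2) * Real.sqrt (1 - (b*s+c)^2))) := by
    intro s hs
    filter_upwards [isOpen_Ioo.mem_nhds hs] with t ht
    exact (key1 t ht).deriv
  -- second derivative
  have key2 : ∀ s ∈ Set.Ioo p q,
      HasDerivAt (deriv τ)
        (3 * ε * b^2 * (b*s+c) / ((1 - (b*s+c)^2)^2 * Real.sqrt (1 - (b*s+c)^2))) s := by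
    intro s hs
    have hg : 0 < 1 - (b*s+c)^2 := by have := hJ s hs; linarith
    exact (aux_d2 b c ε s hg).congr_of_eventuallyEq (hEq s hs)
  refine ⟨fun s hs => ⟨(key1 s hs).differentiableAt, (key2 s hs).differentiableAt⟩, ?_⟩
  intro s hs
  have hg : 0 < 1 - (b*s+c)^2 := by have := hJ s hs; linarith
  have hsq : 0 < Real.sqrt (1 - (b*s+c)^2) := Real.sqrt_pos.mpr hg
  have hss : Real.sqrt (1 - (b*s+c)^2) ^ 2 = 1 - (b*s+c)^2 := Real.sq_sqrt hg.le
  have hd2 : deriv (deriv τ) s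
      = 3 * ε * b^2 * (b*s+c) / ((1 - (b*s+c)^2)^2 * Real.sqrt (1 - (b*s+c)^2)) :=
    (key2 s hs).deriv
  have hd1 : deriv τ s = ε * b / ((1 - (b*s+c)^2) * Real.sqrt (1 - (b*s+c)^2)) :=
    (key1 s hs).deriv
  have hd3 : deriv (fun u => 1 + τ u ^ 2) s = 2 * τ s * deriv τ s := by
    rw [HasDerivAt.deriv (f := fun u => 1 + τ u ^ 2) (((key1 s hs).pow 2).const_add 1), hd1]
    norm_num
  rw [hd3, hd1, hd2, hτ s]
  have hε2 : ε ^ 2 = 1 := by rcases hε with h | h <;> rw [h] <;> norm_num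
  set S := Real.sqrt (1 - (b*s+c)^2) with hS
  have hτs : ε * (b * s + c) / Real.sqrt (1 - (b * s + c) ^ 2) = ε * (b*s+c) / S := rfl
  rw [hτs, ← hss]
  field_simp
  linear_combination (6*ε*b^2*(b*s+c))*hss + (6*ε*b^2*((b*s+c)^3-(b*s+c)))*hε2
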